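/- Cone condition for the LES estimation error (deterministic): assume y = Xβ* + ε with (2/n)·max_{k,j} |X_{kj}^T ε| ≤ λα. Then for every minimizer β̂ of Q, the error Δ = β̂ − β* satisfies Σ_{k ∉ G(β*)} ‖Δ_k‖₁ ≤ Σ_{k ∈ G(β*)} (1 + 2p_k) ‖Δ_k‖₁. -/

import Mathlib

/-- Jensen lower bound for log-sum-exp: `(∑ x)/m + log m ≤ log (∑ exp x)`. -/
lemma lse_lower_aux (m : ℕ) (hm : 1 ≤ m) (x : Fin m → ℝ) :
    (∑ j, x j) / m + Real.log m ≤ Real.log (∑ j : Fin m, Real.exp (x j)) := by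
  have hm0 : (0:ℝ) < m := by exact_mod_cast hm
  have hpos : (0:ℝ) < ∑ j : Fin m, Real.exp (x j) :=
    Finset.sum_pos (fun j _ => Real.exp_pos _) ⟨⟨0, hm⟩, Finset.mem_univ _⟩
  have hJ : Real.exp (∑ j : Fin m, (1/(m:ℝ)) • x j) ≤ ∑ j : Fin m, (1/(m:ℝ)) * Real.exp (x j) :=
    convexOn_exp.map_sum_le (fun i _ => by positivity)
      (by simp [Finset.sum_const, Finset.card_univ]; field_simp) (fun i _ => Set.mem_univ _)
  have h1 : ∑ j : Fin m, (1/(m:ℝ)) • x j = (∑ j, x j) / m := by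
    rw [Finset.sum_div]
    exact Finset.sum_congr rfl fun j _ => by rw [smul_eq_mul]; ring
  have h2 : ∑ j : Fin m, (1/(m:ℝ)) * Real.exp (x j) = (∑ j : Fin m, Real.exp (x j)) / m := by
    rw [Finset.sum_div]
    exact Finset.sum_congr rfl fun j _ => by ring
  rw [h1, h2] at hJ
  have := Real.log_le_log (Real.exp_pos _) hJ
  rw [Real.log_exp, Real.log_div (ne_of_gt hpos) (ne_of_gt hm0)] at this
  linarith

/-- Lipschitz-type bound for log-sum-exp of `α * |·|`. -/
lemma lse_lip_aux (m : ℕ) (hm : 1 ≤ m) (α : ℝ) (hα : 0 < α) (u v : Fin m → ℝ) :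
    Real.log (∑ j : Fin m, Real.exp (α * |v j|)) ≤
      Real.log (∑ j : Fin m, Real.exp (α * |u j|)) + α * ∑ j, |u j - v j| := by
  set d : ℝ := ∑ j, |u j - v j| with hd
  have hd0 : 0 ≤ d := Finset.sum_nonneg fun j _ => abs_nonneg _
  have hposu : (0:ℝ) < ∑ j : Fin m, Real.exp (α * |u j|) :=
    Finset.sum_pos (fun j _ => Real.exp_pos _) ⟨⟨0, hm⟩, Finset.mem_univ _⟩
  have hle : ∑ j : Fin m, Real.exp (α * |v j|) ≤
      (∑ j : Fin m, Real.exp (α * |u j|)) * Real.exp (α * d) := by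
    rw [Finset.sum_mul]
    apply Finset.sum_le_sum
    intro j _
    rw [← Real.exp_add]
    apply Real.exp_le_exp.mpr
    have h1 : |v j| ≤ |u j| + |u j - v j| := by
      calc |v j| = |u j + (v j - u j)| := by ring_nf
        _ ≤ |u j| + |v j - u j| := abs_add_le _ _
        _ = |u j| + |u j - v j| := by rw [abs_sub_comm]
    have h2 : |u j - v j| ≤ d := by
      rw [hd]
      exact Finset.single_le_sum (f := fun i => |u i - v i|)
        (fun i _ => abs_nonneg _) (Finset.mem_univ j)
    nlinarith
  have hposv : (0:ℝ) < ∑ j : Fin m, Real.exp (α * |v j|) :=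
    Finset.sum_pos (fun j _ => Real.exp_pos _) ⟨⟨0, hm⟩, Finset.mem_univ _⟩
  calc Real.log (∑ j : Fin m, Real.exp (α * |v j|))
      ≤ Real.log ((∑ j : Fin m, Real.exp (α * |u j|)) * Real.exp (α * d)) :=
        Real.log_le_log hposv hle
    _ = Real.log (∑ j : Fin m, Real.exp (α * |u j|)) + α * d := by
        rw [Real.log_mul (ne_of_gt hposu) (ne_of_gt (Real.exp_pos _)), Real.log_exp]

/-- **Cone condition for the LES estimation error** (deterministic).
Assume `y = X β* + ε` with `(2/n) max_{k,j} |X kjᵀ ε| ≤ λ α` and weights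
`w k = p k`.  Then for every minimizer `β̂` of `Q`, the error `Δ = β̂ - β*`
satisfies `∑_{k ∉ G(β*)} ‖Δ k‖₁ ≤ ∑_{k ∈ G(β*)} (1 + 2 p k) ‖Δ k‖₁`. -/
theorem les_cone_condition (n K : ℕ) (hn : 0 < n) (hK : 0 < K)
    (p : Fin K → ℕ) (hp : ∀ k, 1 ≤ p k)
    (X : Fin n → (Σ k : Fin K, Fin (p k)) → ℝ)
    (βstar : (Σ k : Fin K, Fin (p k)) → ℝ) (ε y : Fin n → ℝ)
    (hmodel : ∀ i, y i = (∑ j : Σ k : Fin K, Fin (p k), X i j * βstar j) + ε i)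
    (lam α : ℝ) (hlam : 0 < lam) (hα : 0 < α)
    (hnoise : ∀ j : Σ k : Fin K, Fin (p k),
      (2 / (n : ℝ)) * |∑ i : Fin n, X i j * ε i| ≤ lam * α)
    (βh : (Σ k : Fin K, Fin (p k)) → ℝ)
    (hmin : IsMinOn
      (fun β : (Σ k : Fin K, Fin (p k)) → ℝ =>
        (1 / (2 * (n : ℝ))) * ∑ i : Fin n, (y i - ∑ j : Σ k : Fin K, Fin (p k), X i j * β j) ^ 2
          + lam * ∑ k : Fin K, (p k : ℝ) * Real.log (∑ j : Fin (p k), Real.exp (α * |β ⟨k, j⟩|)))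
      Set.univ βh)
    (G : Finset (Fin K)) (hG : ∀ k, k ∈ G ↔ ∃ j : Fin (p k), βstar ⟨k, j⟩ ≠ 0) :
    ∑ k ∈ Gᶜ, (∑ j : Fin (p k), |βh ⟨k, j⟩ - βstar ⟨k, j⟩|) ≤
      ∑ k ∈ G, (1 + 2 * (p k : ℝ)) * ∑ j : Fin (p k), |βh ⟨k, j⟩ - βstar ⟨k, j⟩| := by
  classical
  have hn0 : (0:ℝ) < n := by exact_mod_cast hn
  -- abbreviations
  let ι := (Σ k : Fin K, Fin (p k))
  let Δ : ι → ℝ := fun j => βh j - βstar j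
  let s : Fin K → ℝ := fun k => ∑ j : Fin (p k), |Δ ⟨k, j⟩|
  have hs0 : ∀ k, 0 ≤ s k := fun k => Finset.sum_nonneg fun j _ => abs_nonneg _
  let Sh : Fin K → ℝ := fun k => ∑ j : Fin (p k), Real.exp (α * |βh ⟨k, j⟩|)
  let Ss : Fin K → ℝ := fun k => ∑ j : Fin (p k), Real.exp (α * |βstar ⟨k, j⟩|)
  let r : Fin n → ℝ := fun i => ∑ j : ι, X i j * Δ j
  -- minimizer inequality
  have hQ := isMinOn_iff.mp hmin βstar (Set.mem_univ _)
  -- residual identities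
  have hr1 : ∀ i, y i - ∑ j : ι, X i j * βh j = ε i - r i := by
    intro i
    have h : ∑ j : ι, X i j * Δ j = (∑ j : ι, X i j * βh j) - ∑ j : ι, X i j * βstar j := by
      rw [← Finset.sum_sub_distrib]
      exact Finset.sum_congr rfl fun j _ => by show X i j * (βh j - βstar j) = _; ring
    rw [hmodel i]
    show (∑ j : ι, X i j * βstar j) + ε i - ∑ j : ι, X i j * βh j = ε i - r i
    rw [show r i = ∑ j : ι, X i j * Δ j from rfl, h]; ring
  have hr2 : ∀ i, y i - ∑ j : ι, X i j * βstar j = ε i := by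
    intro i; rw [hmodel i]; ring
  -- rewrite the two quadratic sums
  have hA : ∑ i : Fin n, (y i - ∑ j : ι, X i j * βh j) ^ 2 = ∑ i : Fin n, (ε i - r i) ^ 2 :=
    Finset.sum_congr rfl fun i _ => by rw [hr1 i]
  have hB : ∑ i : Fin n, (y i - ∑ j : ι, X i j * βstar j) ^ 2 = ∑ i : Fin n, (ε i) ^ 2 :=
    Finset.sum_congr rfl fun i _ => by rw [hr2 i]
  rw [hA, hB] at hQ
  -- expand the square
  have hsq : ∑ i : Fin n, (ε i - r i) ^ 2
      = (∑ i : Fin n, (ε i) ^ 2) - 2 * (∑ i : Fin n, ε i * r i) + ∑ i : Fin n, (r i) ^ 2 := by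
    have h := Finset.sum_congr rfl
      (fun i (_ : i ∈ (Finset.univ : Finset (Fin n))) =>
        (by ring : (ε i - r i) ^ 2 = (ε i) ^ 2 - 2 * (ε i * r i) + (r i) ^ 2))
    rw [h, Finset.sum_add_distrib, Finset.sum_sub_distrib, Finset.mul_sum]
  have hR0 : 0 ≤ ∑ i : Fin n, (r i) ^ 2 := Finset.sum_nonneg fun i _ => sq_nonneg _
  -- swap the double sum
  have hswap : ∑ i : Fin n, ε i * r i = ∑ j : ι, (∑ i : Fin n, X i j * ε i) * Δ j := by
    calc ∑ i : Fin n, ε i * r i = ∑ i : Fin n, ∑ j : ι, ε i * (X i j * Δ j) :=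
          Finset.sum_congr rfl fun i _ => by
            show ε i * ∑ j : ι, X i j * Δ j = _; rw [Finset.mul_sum]
      _ = ∑ j : ι, ∑ i : Fin n, ε i * (X i j * Δ j) := Finset.sum_comm
      _ = ∑ j : ι, (∑ i : Fin n, X i j * ε i) * Δ j := Finset.sum_congr rfl fun j _ => by
          rw [Finset.sum_mul]; exact Finset.sum_congr rfl fun i _ => by ring
  -- noise bound
  have hE : ∑ i : Fin n, ε i * r i ≤ (n * (lam * α) / 2) * ∑ j : ι, |Δ j| := by
    rw [hswap, Finset.mul_sum]
    apply Finset.sum_le_sum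
    intro j _
    have hC : |∑ i : Fin n, X i j * ε i| ≤ n * (lam * α) / 2 := by
      have h := hnoise j
      rw [div_mul_eq_mul_div, div_le_iff₀ hn0] at h
      linarith
    calc (∑ i : Fin n, X i j * ε i) * Δ j ≤ |(∑ i : Fin n, X i j * ε i) * Δ j| := le_abs_self _
      _ = |∑ i : Fin n, X i j * ε i| * |Δ j| := abs_mul _ _
      _ ≤ (n * (lam * α) / 2) * |Δ j| := by
          apply mul_le_mul_of_nonneg_right hC (abs_nonneg _)
  -- total ℓ1 error
  have hT : ∑ j : ι, |Δ j| = ∑ k : Fin K, s k := by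
    rw [show (Finset.univ : Finset ι) = Finset.univ.sigma fun _ => Finset.univ from
      (Finset.univ_sigma_univ).symm, Finset.sum_sigma]
  -- penalty difference lower bound, out-of-support groups
  have hout : ∀ k ∈ Gᶜ, α * s k ≤ (p k : ℝ) * Real.log (Sh k) - (p k : ℝ) * Real.log (Ss k) := by
    intro k hk
    have hz : ∀ j : Fin (p k), βstar ⟨k, j⟩ = 0 := by
      intro j
      by_contra h
      exact (Finset.mem_compl.mp hk) ((hG k).mpr ⟨j, h⟩)
    have hSs : Ss k = (p k : ℝ) := by
      show ∑ j : Fin (p k), Real.exp (α * |βstar ⟨k, j⟩|) = (p k : ℝ)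
      simp [hz]
    have hpk : (0:ℝ) < (p k : ℝ) := by exact_mod_cast hp k
    have hlow := lse_lower_aux (p k) (hp k) (fun j => α * |βh ⟨k, j⟩|)
    have hsum : ∑ j : Fin (p k), α * |βh ⟨k, j⟩| = α * s k := by
      rw [show s k = ∑ j : Fin (p k), |Δ ⟨k, j⟩| from rfl, Finset.mul_sum]
      exact Finset.sum_congr rfl fun j _ => by
        show α * |βh ⟨k, j⟩| = α * |βh ⟨k, j⟩ - βstar ⟨k, j⟩|
        rw [hz j, sub_zero]
    rw [hsum] at hlow
    have hmul := mul_le_mul_of_nonneg_left hlow (le_of_lt hpk)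
    rw [hSs]
    have hexp : (p k : ℝ) * (α * s k / (p k : ℝ) + Real.log (p k : ℝ))
        = α * s k + (p k : ℝ) * Real.log (p k : ℝ) := by
      field_simp
    rw [hexp] at hmul
    have : (p k : ℝ) * Real.log (Sh k)
        = (p k : ℝ) * Real.log (∑ j : Fin (p k), Real.exp (α * |βh ⟨k, j⟩|)) := rfl
    linarith [hmul]
  -- penalty difference lower bound, support groups
  have hin : ∀ k ∈ G, -((p k : ℝ) * (α * s k)) ≤
      (p k : ℝ) * Real.log (Sh k) - (p k : ℝ) * Real.log (Ss k) := by
    intro k _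
    have hpk : (0:ℝ) ≤ (p k : ℝ) := by positivity
    have hlip := lse_lip_aux (p k) (hp k) α hα (fun j => βh ⟨k, j⟩) (fun j => βstar ⟨k, j⟩)
    have hsum : ∑ j : Fin (p k), |βh ⟨k, j⟩ - βstar ⟨k, j⟩| = s k := rfl
    rw [hsum] at hlip
    have : Real.log (Ss k) - Real.log (Sh k) ≤ α * s k := by
      have h1 : Real.log (Ss k) ≤ Real.log (Sh k) + α * s k := hlip
      linarith
    nlinarith [mul_le_mul_of_nonneg_left this hpk]
  -- combine penalty bounds
  have hpen : α * (∑ k ∈ Gᶜ, s k) - α * (∑ k ∈ G, (p k : ℝ) * s k) ≤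
      (∑ k : Fin K, (p k : ℝ) * Real.log (Sh k)) - ∑ k : Fin K, (p k : ℝ) * Real.log (Ss k) := by
    have hsplit : ∀ f : Fin K → ℝ, ∑ k : Fin K, f k = (∑ k ∈ G, f k) + ∑ k ∈ Gᶜ, f k :=
      fun f => (Finset.sum_add_sum_compl G f).symm
    rw [← Finset.sum_sub_distrib, hsplit (fun k => (p k : ℝ) * Real.log (Sh k) - (p k : ℝ) * Real.log (Ss k))]
    have h1 : ∑ k ∈ Gᶜ, α * s k ≤
        ∑ k ∈ Gᶜ, ((p k : ℝ) * Real.log (Sh k) - (p k : ℝ) * Real.log (Ss k)) :=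
      Finset.sum_le_sum hout
    have h2 : ∑ k ∈ G, -((p k : ℝ) * (α * s k)) ≤
        ∑ k ∈ G, ((p k : ℝ) * Real.log (Sh k) - (p k : ℝ) * Real.log (Ss k)) :=
      Finset.sum_le_sum hin
    have e1 : ∑ k ∈ Gᶜ, α * s k = α * ∑ k ∈ Gᶜ, s k := (Finset.mul_sum _ _ _).symm
    have e2 : ∑ k ∈ G, -((p k : ℝ) * (α * s k)) = -(α * ∑ k ∈ G, (p k : ℝ) * s k) := by
      rw [Finset.mul_sum, ← Finset.sum_neg_distrib]
      exact Finset.sum_congr rfl fun k _ => by ring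
    rw [e1] at h1
    rw [e2] at h2
    linarith
  -- assemble: from hQ
  rw [hsq] at hQ
  -- hQ : (1/(2n)) * (B - 2E + R) + lam * Ph ≤ (1/(2n)) * B + lam * Ps
  set B := ∑ i : Fin n, (ε i) ^ 2
  set E := ∑ i : Fin n, ε i * r i
  set R := ∑ i : Fin n, (r i) ^ 2
  set Ph := ∑ k : Fin K, (p k : ℝ) * Real.log (Sh k) with hPh
  set Ps := ∑ k : Fin K, (p k : ℝ) * Real.log (Ss k) with hPs
  have hQ' : lam * Ph - lam * Ps ≤ (1 / (2 * (n:ℝ))) * (2 * E - R) := by nlinarith [hQ]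
  have hE' : (1 / (2 * (n:ℝ))) * (2 * E - R) ≤ E / n := by
    have h : (1 / (2 * (n:ℝ))) * (2 * E - R) ≤ (1 / (2 * (n:ℝ))) * (2 * E) :=
      mul_le_mul_of_nonneg_left (by linarith) (by positivity)
    have he : (1 / (2 * (n:ℝ))) * (2 * E) = E / n := by field_simp
    linarith
  have hEbound : E / n ≤ (lam * α / 2) * ∑ k : Fin K, s k := by
    rw [← hT]
    rw [div_le_iff₀ hn0]
    calc E ≤ (n * (lam * α) / 2) * ∑ j : ι, |Δ j| := hE
      _ = (lam * α / 2) * (∑ j : ι, |Δ j|) * n := by ring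
  -- final combination
  have hfinal : lam * (α * (∑ k ∈ Gᶜ, s k) - α * (∑ k ∈ G, (p k : ℝ) * s k)) ≤
      (lam * α / 2) * ((∑ k ∈ G, s k) + ∑ k ∈ Gᶜ, s k) := by
    have hl : lam * (α * (∑ k ∈ Gᶜ, s k) - α * (∑ k ∈ G, (p k : ℝ) * s k)) ≤ lam * (Ph - Ps) := by
      apply mul_le_mul_of_nonneg_left hpen (le_of_lt hlam)
    have hsum : ∑ k : Fin K, s k = (∑ k ∈ G, s k) + ∑ k ∈ Gᶜ, s k :=
      (Finset.sum_add_sum_compl G s).symm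
    calc lam * (α * (∑ k ∈ Gᶜ, s k) - α * (∑ k ∈ G, (p k : ℝ) * s k)) ≤ lam * (Ph - Ps) := hl
      _ = lam * Ph - lam * Ps := by ring
      _ ≤ (1 / (2 * (n:ℝ))) * (2 * E - R) := hQ'
      _ ≤ E / n := hE'
      _ ≤ (lam * α / 2) * ∑ k : Fin K, s k := hEbound
      _ = (lam * α / 2) * ((∑ k ∈ G, s k) + ∑ k ∈ Gᶜ, s k) := by rw [hsum]
  -- divide by lam * α > 0
  have hla : (0:ℝ) < lam * α := mul_pos hlam hα
  have hkey : (∑ k ∈ Gᶜ, s k) ≤ (∑ k ∈ G, s k) + 2 * ∑ k ∈ G, (p k : ℝ) * s k := by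
    nlinarith [hfinal]
  have hrhs : ∑ k ∈ G, (1 + 2 * (p k : ℝ)) * s k
      = (∑ k ∈ G, s k) + 2 * ∑ k ∈ G, (p k : ℝ) * s k := by
    rw [Finset.mul_sum, ← Finset.sum_add_distrib]
    exact Finset.sum_congr rfl fun k _ => by ring
  show ∑ k ∈ Gᶜ, s k ≤ ∑ k ∈ G, (1 + 2 * (p k : ℝ)) * s k
  rw [hrhs]
  exact hkey
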